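/- ∑_{n=0}^∞ 1/sinh(2ⁿ) = coth(1/2) − 1. -/

import Mathlib

/-- The real hyperbolic cotangent. -/
noncomputable def Real.coth (x : ℝ) : ℝ := Real.cosh x / Real.sinh x

lemma coth_key (x : ℝ) (hx : 0 < x) :
    1 / Real.sinh x = Real.coth (x / 2) - Real.coth x := by
  have h1 : Real.sinh (x / 2) ≠ 0 := ne_of_gt (Real.sinh_pos_iff.2 (by linarith))
  have h2 : Real.sinh x ≠ 0 := ne_of_gt (Real.sinh_pos_iff.2 hx)
  rw [Real.coth, Real.coth, div_sub_div _ _ h1 h2]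
  have hnum : Real.cosh (x / 2) * Real.sinh x - Real.sinh (x / 2) * Real.cosh x
      = Real.sinh (x / 2) := by
    have := Real.sinh_sub x (x / 2)
    rw [show x - x / 2 = x / 2 by ring] at this
    linarith [this]
  rw [hnum]
  rw [div_eq_div_iff h2 (mul_ne_zero h1 h2)]
  ring

lemma coth_eq (x : ℝ) (hx : 0 < x) :
    Real.coth x = 1 + 2 / (Real.exp (2 * x) - 1) := by
  have h2 : Real.sinh x ≠ 0 := ne_of_gt (Real.sinh_pos_iff.2 hx)
  have he : Real.exp (2 * x) - 1 ≠ 0 := by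
    have : 1 < Real.exp (2 * x) := Real.one_lt_exp_iff.mpr (by linarith)
    linarith
  have h2x : Real.exp (2 * x) = Real.exp x * Real.exp x := by
    rw [← Real.exp_add]; ring_nf
  have hx0 : Real.exp x ≠ 0 := Real.exp_ne_zero x
  rw [Real.coth, div_eq_iff h2, Real.sinh_eq, Real.cosh_eq, Real.exp_neg, h2x]
  have he2 : Real.exp x * Real.exp x - 1 ≠ 0 := by rw [← h2x]; exact he
  have he3 : Real.exp x ^ 2 - 1 ≠ 0 := by rw [sq]; exact he2
  field_simp
  ring

lemma coth_tendsto : Filter.Tendsto Real.coth Filter.atTop (nhds 1) := by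
  have h : Filter.Tendsto (fun x : ℝ => 1 + 2 / (Real.exp (2 * x) - 1))
      Filter.atTop (nhds 1) := by
    have h1 : Filter.Tendsto (fun x : ℝ => Real.exp (2 * x) - 1) Filter.atTop Filter.atTop := by
      apply Filter.tendsto_atTop_add_const_right
      exact Real.tendsto_exp_atTop.comp (Filter.tendsto_id.const_mul_atTop two_pos)
    have := Filter.Tendsto.div_atTop (tendsto_const_nhds (x := (2:ℝ))) h1
    have := this.const_add 1
    simpa using this
  apply h.congr'
  filter_upwards [Filter.eventually_gt_atTop 0] with x hx
  exact (coth_eq x hx).symm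

theorem stmt3 :
    HasSum (fun n : ℕ => 1 / Real.sinh (2 ^ n)) (Real.coth (1 / 2) - 1) := by
  have hpos : ∀ n : ℕ, (0:ℝ) < Real.sinh (2 ^ n) :=
    fun n => Real.sinh_pos_iff.2 (by positivity)
  rw [hasSum_iff_tendsto_nat_of_nonneg (fun n => by positivity)]
  have hsum : ∀ N : ℕ, ∑ n ∈ Finset.range N, 1 / Real.sinh (2 ^ n)
      = Real.coth (1 / 2) - Real.coth ((2:ℝ) ^ N / 2) := by
    intro N
    induction N with
    | zero => simp
    | succ N ih =>
      rw [Finset.sum_range_succ, ih, coth_key ((2:ℝ)^N) (by positivity)]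
      rw [pow_succ]
      ring_nf
  have := hsum
  apply Filter.Tendsto.congr (fun N => (hsum N).symm)
  have ht : Filter.Tendsto (fun N : ℕ => (2:ℝ) ^ N / 2) Filter.atTop Filter.atTop := by
    apply Filter.Tendsto.atTop_div_const two_pos
    exact tendsto_pow_atTop_atTop_of_one_lt one_lt_two
  have := (coth_tendsto.comp ht).const_sub (Real.coth (1/2))
  simpa using this
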